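/- Let q be an odd prime power, U = [[a, b-a-1],[b,-1-a]] with b^2 - ab + a^2 + a + 1 = b, b ≠ 0, and V_α = [[1,α],[-α,1+α]] for α ∈ F_q with α^2 + α + 1 ≠ 0. Then Tr(V_α U V_α^{-1} U^{-1}) = 2(α+1)(α^2+α+1)^{-1}, where V_α^{-1} is computed as (α^2+α+1)^{-1}[[1+α,-α],[α,1]]. -/

import Mathlib

open Matrix

/-- For `U = [[a, b-a-1],[b,-1-a]]` with `b² - ab + a² + a + 1 = b`, `b ≠ 0`, and
`V_α = [[1,α],[-α,1+α]]` with `α² + α + 1 ≠ 0`, we have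
`Tr(V_α U V_α⁻¹ U⁻¹) = 2(α+1)(α²+α+1)⁻¹`, where `V_α⁻¹ = (α²+α+1)⁻¹ [[1+α,-α],[α,1]]`. -/
theorem stmt16 (p n : ℕ) (hp : p.Prime) (hodd : Odd p) (hn : 0 < n)
    (F : Type) [Field F] [Fintype F] (hcard : Fintype.card F = p ^ n)
    (a b α : F) (hb : b ≠ 0) (hrel : b ^ 2 - a * b + a ^ 2 + a + 1 = b)
    (hα : α ^ 2 + α + 1 ≠ 0) :
    Matrix.trace
      ((!![1, α; -α, 1 + α] : Matrix (Fin 2) (Fin 2) F) * !![a, b - a - 1; b, -1 - a] *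
        ((α ^ 2 + α + 1)⁻¹ • (!![1 + α, -α; α, 1] : Matrix (Fin 2) (Fin 2) F)) *
        (!![a, b - a - 1; b, -1 - a] : Matrix (Fin 2) (Fin 2) F)⁻¹) =
      2 * (α + 1) * (α ^ 2 + α + 1)⁻¹ := by
  have hinv : (!![a, b - a - 1; b, -1 - a] : Matrix (Fin 2) (Fin 2) F)⁻¹
      = !![-1 - a, -(b - a - 1); -b, a] := by
    apply inv_eq_right_inv
    ext i j
    fin_cases i <;> fin_cases j <;>
      simp [Matrix.mul_apply, Fin.sum_univ_succ, Matrix.one_apply] <;>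
      first | ring1 | linear_combination -hrel
  rw [hinv]
  simp only [Matrix.trace_fin_two, Matrix.mul_apply, Matrix.smul_apply, Fin.sum_univ_succ,
    Fin.sum_univ_zero, smul_eq_mul, Matrix.of_apply, Matrix.cons_val', Matrix.cons_val_zero,
    Matrix.cons_val_one, Matrix.head_cons, Matrix.empty_val', Matrix.cons_val_fin_one,
    Fin.succ_zero_eq_one]
  field_simp [show α * (α + 1) + 1 ≠ 0 from fun h => hα (by linear_combination h)]
  ring_nf
  linear_combination (α^2 - 2*α - 2) * hrel
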